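/- Let Q : [0,1] → ℝ be measurable and bounded, and let Q* be its increasing monotone rearrangement. Then for every true nondecreasing function Q₀ : [0,1] → ℝ in L^p([0,1]) and every p ∈ [1,∞), we have ‖Q* − Q₀‖_{L^p} ≤ ‖Q − Q₀‖_{L^p}. (Improvement-in-estimation property of rearrangement.) -/

import Mathlib

open MeasureTheory Set Filter Topology

/-- Distribution function of `Q(U)`, `U` uniform on `[0,1]`. -/
noncomputable def distF (Q : ℝ → ℝ) (y : ℝ) : ℝ :=
  (volume {u ∈ Set.Icc (0:ℝ) 1 | Q u ≤ y}).toReal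

/-- Increasing (monotone) rearrangement of `Q`: the quantile function of `distF Q`. -/
noncomputable def rearr (Q : ℝ → ℝ) (u : ℝ) : ℝ :=
  sInf {y : ℝ | u ≤ distF Q y}

open scoped ENNReal

namespace RearrAux

lemma vol_ne_top {S : Set ℝ} (h : S ⊆ Set.Icc (0:ℝ) 1) : volume S ≠ ⊤ := by
  refine ne_top_of_le_ne_top ?_ (measure_mono h)
  simp [Real.volume_Icc]

lemma distF_mono (Q : ℝ → ℝ) : Monotone (distF Q) := by
  intro s t hst
  refine ENNReal.toReal_mono (vol_ne_top (sep_subset _ _)) (measure_mono ?_)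
  exact fun u hu => ⟨hu.1, hu.2.trans hst⟩

lemma distF_nonneg (Q : ℝ → ℝ) (y : ℝ) : 0 ≤ distF Q y := ENNReal.toReal_nonneg

lemma distF_le_one (Q : ℝ → ℝ) (y : ℝ) : distF Q y ≤ 1 := by
  have h : volume {u ∈ Set.Icc (0:ℝ) 1 | Q u ≤ y} ≤ volume (Set.Icc (0:ℝ) 1) :=
    measure_mono (sep_subset _ _)
  have := ENNReal.toReal_mono (by simp [Real.volume_Icc]) h
  simpa [distF, Real.volume_Icc, ENNReal.toReal_ofReal] using this

lemma A_vol (Q : ℝ → ℝ) (s : ℝ) :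
    volume {u ∈ Set.Icc (0:ℝ) 1 | Q u ≤ s} = ENNReal.ofReal (distF Q s) :=
  (ENNReal.ofReal_toReal (vol_ne_top (sep_subset _ _))).symm

/-- Galois relation for the quantile function. -/
lemma rearr_le_iff (Q : ℝ → ℝ) (hmeas : Measurable Q) (M : ℝ)
    (hbdd : ∀ u ∈ Set.Icc (0:ℝ) 1, |Q u| ≤ M) {u : ℝ} (hu0 : 0 < u) (hu1 : u ≤ 1) (s : ℝ) :
    rearr Q u ≤ s ↔ u ≤ distF Q s := by
  have hFM : distF Q M = 1 := by
    have hset : {x ∈ Set.Icc (0:ℝ) 1 | Q x ≤ M} = Set.Icc (0:ℝ) 1 := by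
      ext x
      simp only [mem_sep_iff, and_iff_left_iff_imp]
      exact fun hx => (abs_le.1 (hbdd x hx)).2
    rw [distF, hset]
    simp [Real.volume_Icc]
  have hne : {y : ℝ | u ≤ distF Q y}.Nonempty := ⟨M, by simpa [hFM] using hu1⟩
  have hbddb : BddBelow {y : ℝ | u ≤ distF Q y} := by
    refine ⟨-M, fun y hy => ?_⟩
    simp only [mem_setOf_eq] at hy
    have hpos : volume {x ∈ Set.Icc (0:ℝ) 1 | Q x ≤ y} ≠ 0 := by
      intro h0
      rw [distF, h0] at hy
      simp at hy
      linarith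
    obtain ⟨x, hx⟩ := nonempty_of_measure_ne_zero hpos
    have h1 := (abs_le.1 (hbdd x hx.1)).1
    linarith [hx.2]
  constructor
  · intro hr
    have hstep : ∀ ε : ℝ, 0 < ε → u ≤ distF Q (s + ε) := by
      intro ε hε
      obtain ⟨y, hy, hylt⟩ :=
        exists_lt_of_csInf_lt hne (lt_of_le_of_lt hr (lt_add_of_pos_right s hε))
      exact le_trans hy (distF_mono Q hylt.le)
    set T : ℕ → Set ℝ := fun n => {x ∈ Set.Icc (0:ℝ) 1 | Q x ≤ s + 1/(n+1)} with hT
    have hTmeas : ∀ n, NullMeasurableSet (T n) volume := fun n =>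
      ((measurableSet_Icc.inter (hmeas measurableSet_Iic)).nullMeasurableSet)
    have hanti : Antitone T := by
      intro m n hmn x hx
      refine ⟨hx.1, hx.2.trans ?_⟩
      have h1 : (1:ℝ)/(n+1) ≤ 1/(m+1) := by
        apply one_div_le_one_div_of_le
        · positivity
        · have := (Nat.cast_le (α := ℝ)).2 hmn; linarith
      linarith
    have hfin : ∃ n, volume (T n) ≠ ⊤ := ⟨0, vol_ne_top (sep_subset _ _)⟩
    have hlim := tendsto_measure_iInter_atTop hTmeas hanti hfin
    have hiInter : (⋂ n, T n) = {x ∈ Set.Icc (0:ℝ) 1 | Q x ≤ s} := by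
      ext x
      simp only [mem_iInter, mem_sep_iff]
      constructor
      · intro h
        refine ⟨(h 0).1, ?_⟩
        by_contra hlt
        push_neg at hlt
        obtain ⟨n, hn⟩ := exists_nat_one_div_lt (sub_pos.2 hlt)
        have := (h n).2
        have : (1:ℝ)/(n+1) < Q x - s := by exact_mod_cast hn
        linarith [(h n).2]
      · intro h n
        refine ⟨h.1, h.2.trans (le_add_of_nonneg_right (by positivity))⟩
    rw [hiInter] at hlim
    have hlim' : Tendsto (fun n : ℕ => distF Q (s + 1/(n+1))) atTop (𝓝 (distF Q s)) :=
      (ENNReal.tendsto_toReal (vol_ne_top (sep_subset _ _))).comp hlim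
    exact ge_of_tendsto' hlim' fun n => hstep _ (by positivity)
  · intro h
    exact csInf_le hbddb h

/-- Measurable modification of the rearrangement. -/
noncomputable def Gfun (Q : ℝ → ℝ) : ℝ → ℝ :=
  fun u => if u ∈ Set.Ioc (0:ℝ) 1 then rearr Q u else 0

section G

variable (Q : ℝ → ℝ) (hmeas : Measurable Q) (M : ℝ)
  (hbdd : ∀ u ∈ Set.Icc (0:ℝ) 1, |Q u| ≤ M)

include hmeas hbdd

lemma Gfun_sub1 (s : ℝ) :
    Set.Ioc 0 (distF Q s) ⊆ {u ∈ Set.Icc (0:ℝ) 1 | Gfun Q u ≤ s} := by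
  intro u hu
  have hu1 : u ≤ 1 := hu.2.trans (distF_le_one Q s)
  have huI : u ∈ Set.Ioc (0:ℝ) 1 := ⟨hu.1, hu1⟩
  refine ⟨⟨hu.1.le, hu1⟩, ?_⟩
  rw [Gfun, if_pos huI]
  exact (rearr_le_iff Q hmeas M hbdd hu.1 hu1 s).2 hu.2

lemma Gfun_sub2 (s : ℝ) :
    {u ∈ Set.Icc (0:ℝ) 1 | Gfun Q u ≤ s} ⊆ Set.Ioc 0 (distF Q s) ∪ {0} := by
  rintro u ⟨huI, hus⟩
  rcases eq_or_lt_of_le huI.1 with h0 | h0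
  · exact Or.inr (by simp [← h0])
  · left
    have huI' : u ∈ Set.Ioc (0:ℝ) 1 := ⟨h0, huI.2⟩
    rw [Gfun, if_pos huI'] at hus
    exact ⟨h0, (rearr_le_iff Q hmeas M hbdd h0 huI.2 s).1 hus⟩

lemma Gfun_vol (s : ℝ) :
    volume {u ∈ Set.Icc (0:ℝ) 1 | Gfun Q u ≤ s} = ENNReal.ofReal (distF Q s) := by
  apply le_antisymm
  · calc volume {u ∈ Set.Icc (0:ℝ) 1 | Gfun Q u ≤ s}
        ≤ volume (Set.Ioc 0 (distF Q s) ∪ {0}) :=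
          measure_mono (Gfun_sub2 Q hmeas M hbdd s)
      _ ≤ volume (Set.Ioc 0 (distF Q s)) + volume ({0} : Set ℝ) := measure_union_le _ _
      _ = ENNReal.ofReal (distF Q s) := by simp [Real.volume_Ioc]
  · calc ENNReal.ofReal (distF Q s) = volume (Set.Ioc 0 (distF Q s)) := by
          simp [Real.volume_Ioc]
      _ ≤ _ := measure_mono (Gfun_sub1 Q hmeas M hbdd s)

lemma Gfun_meas : Measurable (Gfun Q) := by
  apply measurable_of_Iic
  intro s
  have hset : Gfun Q ⁻¹' Set.Iic s
      = Set.Ioc 0 (distF Q s) ∪ {u | u ∉ Set.Ioc (0:ℝ) 1 ∧ 0 ≤ s} := by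
    ext u
    simp only [mem_preimage, mem_Iic, Gfun, mem_union, mem_setOf_eq]
    by_cases hu : u ∈ Set.Ioc (0:ℝ) 1
    · rw [if_pos hu]
      rw [rearr_le_iff Q hmeas M hbdd hu.1 hu.2 s]
      constructor
      · intro h; exact Or.inl ⟨hu.1, h⟩
      · rintro (h | h)
        · exact h.2
        · exact absurd hu h.1
    · rw [if_neg hu]
      constructor
      · intro h; exact Or.inr ⟨hu, h⟩
      · rintro (h | h)
        · exact absurd ⟨h.1, h.2.trans (distF_le_one Q s)⟩ hu
        · exact h.2
  rw [hset]
  apply measurableSet_Ioc.union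
  by_cases hs : (0:ℝ) ≤ s
  · simp only [hs, and_true]
    exact measurableSet_Ioc.compl
  · simp only [hs, and_false]
    exact MeasurableSet.empty

end G

/-- Key Hardy–Littlewood type inequality. -/
lemma key_ineq (Q : ℝ → ℝ) (hmeas : Measurable Q) (M : ℝ)
    (hbdd : ∀ u ∈ Set.Icc (0:ℝ) 1, |Q u| ≤ M)
    (Q₀ : ℝ → ℝ) (hmono₀ : MonotoneOn Q₀ (Set.Icc (0:ℝ) 1)) (s t : ℝ) :
    volume ({u ∈ Set.Icc (0:ℝ) 1 | Q u ≤ s} ∩ {u ∈ Set.Icc (0:ℝ) 1 | Q₀ u ≤ t})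
      ≤ volume ({u ∈ Set.Icc (0:ℝ) 1 | Gfun Q u ≤ s} ∩ {u ∈ Set.Icc (0:ℝ) 1 | Q₀ u ≤ t}) := by
  set B := {u ∈ Set.Icc (0:ℝ) 1 | Q₀ u ≤ t} with hB
  have hBfin : volume B ≠ ⊤ := vol_ne_top (sep_subset _ _)
  set b' := (volume B).toReal with hb'
  have hb'le : b' ≤ 1 := by
    have h : volume B ≤ volume (Set.Icc (0:ℝ) 1) := measure_mono (sep_subset _ _)
    rw [Real.volume_Icc] at h
    exact ENNReal.toReal_le_of_le_ofReal zero_le_one (by simpa using h)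
  have hIoo : Set.Ioo 0 b' ⊆ B := by
    intro u hu
    by_contra hout
    have huI : u ∈ Set.Icc (0:ℝ) 1 := ⟨hu.1.le, hu.2.le.trans hb'le⟩
    have hQ₀ : ¬ Q₀ u ≤ t := fun h => hout ⟨huI, h⟩
    have hBsub : B ⊆ Set.Icc 0 u := by
      rintro v ⟨hvI, hvt⟩
      refine ⟨hvI.1, ?_⟩
      by_contra hvu
      push_neg at hvu
      exact hQ₀ (le_trans (hmono₀ huI hvI hvu.le) hvt)
    have h1 : volume B ≤ ENNReal.ofReal u := by
      calc volume B ≤ volume (Set.Icc 0 u) := measure_mono hBsub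
        _ = ENNReal.ofReal u := by simp [Real.volume_Icc]
    have h2 : b' ≤ u := ENNReal.toReal_le_of_le_ofReal hu.1.le h1
    linarith [hu.2]
  calc volume ({u ∈ Set.Icc (0:ℝ) 1 | Q u ≤ s} ∩ B)
      ≤ min (ENNReal.ofReal (distF Q s)) (volume B) := by
        refine le_min ?_ (measure_mono inter_subset_right)
        exact (measure_mono inter_subset_left).trans (le_of_eq (A_vol Q s))
    _ = volume (Set.Ioo 0 (min (distF Q s) b')) := by
        rw [Real.volume_Ioo, sub_zero]
        rw [show volume B = ENNReal.ofReal b' from (ENNReal.ofReal_toReal hBfin).symm]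
        exact (Monotone.map_min (fun a b hab => ENNReal.ofReal_le_ofReal hab)).symm
    _ ≤ volume ({u ∈ Set.Icc (0:ℝ) 1 | Gfun Q u ≤ s} ∩ B) := by
        refine measure_mono (subset_inter ?_ ?_)
        · intro u hu
          exact Gfun_sub1 Q hmeas M hbdd s ⟨hu.1, hu.2.le.trans (min_le_left _ _)⟩
        · intro u hu
          exact hIoo ⟨hu.1, lt_of_lt_of_le hu.2 (min_le_right _ _)⟩

/-- Hinge integrals as integrals of measures of level-set differences. -/
lemma hinge_eq (f h : ℝ → ℝ) (hf : Measurable f) (hh : Measurable h) (r : ℝ) :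
    ∫⁻ u in Set.Icc (0:ℝ) 1, ENNReal.ofReal (h u - f u - r)
      = ∫⁻ s, volume ({u ∈ Set.Icc (0:ℝ) 1 | f u ≤ s} \ {u ∈ Set.Icc (0:ℝ) 1 | h u ≤ s + r}) := by
  set C : Set (ℝ × ℝ) := {p : ℝ × ℝ | f p.1 ≤ p.2} ∩ {p : ℝ × ℝ | h p.1 ≤ p.2 + r}ᶜ with hCdef
  have hC : MeasurableSet C :=
    (measurableSet_le (hf.comp measurable_fst) measurable_snd).inter
      (measurableSet_le (hh.comp measurable_fst) (measurable_snd.add_const r)).compl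
  have hmem : ∀ u s : ℝ, ((u, s) ∈ C ↔ s ∈ Set.Ico (f u) (h u - r)) := by
    intro u s
    simp only [hCdef, mem_inter_iff, mem_setOf_eq, mem_compl_iff, mem_Ico]
    rw [lt_sub_iff_add_lt, ← not_le]
  calc ∫⁻ u in Set.Icc (0:ℝ) 1, ENNReal.ofReal (h u - f u - r)
      = ∫⁻ u in Set.Icc (0:ℝ) 1, ∫⁻ s, C.indicator 1 (u, s) := by
        refine lintegral_congr fun u => ?_
        have heq : (fun s => C.indicator (1 : ℝ × ℝ → ℝ≥0∞) (u, s))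
            = (Set.Ico (f u) (h u - r)).indicator (1 : ℝ → ℝ≥0∞) := by
          funext s
          simp only [Set.indicator_apply, Pi.one_apply, hmem u s]
        rw [heq, lintegral_indicator_one measurableSet_Ico, Real.volume_Ico]
        congr 1
        ring
    _ = ∫⁻ s, ∫⁻ u in Set.Icc (0:ℝ) 1, C.indicator 1 (u, s) := by
        exact lintegral_lintegral_swap ((measurable_one.indicator hC).aemeasurable)
    _ = ∫⁻ s, volume ({u ∈ Set.Icc (0:ℝ) 1 | f u ≤ s}
          \ {u ∈ Set.Icc (0:ℝ) 1 | h u ≤ s + r}) := by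
        refine lintegral_congr fun s => ?_
        have hD : MeasurableSet {u : ℝ | f u ≤ s ∧ ¬ h u ≤ s + r} := by
          refine (measurableSet_le hf measurable_const).inter ?_
          exact (measurableSet_le hh measurable_const).compl
        have hmem2 : ∀ u : ℝ, ((u, s) ∈ C ↔ u ∈ {u : ℝ | f u ≤ s ∧ ¬ h u ≤ s + r}) := by
          intro u
          simp only [hCdef, mem_inter_iff, mem_setOf_eq, mem_compl_iff]
        have heq : (fun u => C.indicator (1 : ℝ × ℝ → ℝ≥0∞) (u, s))
            = ({u : ℝ | f u ≤ s ∧ ¬ h u ≤ s + r}).indicator (1 : ℝ → ℝ≥0∞) := by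
          funext u
          simp only [Set.indicator_apply, Pi.one_apply, hmem2 u]
        rw [heq, lintegral_indicator_one hD, Measure.restrict_apply hD]
        congr 1
        ext u
        simp only [mem_inter_iff, mem_setOf_eq, mem_diff, mem_sep_iff]
        tauto

/-- Per-level comparison of difference measures. -/
lemma diff_le {X Y B₁ B₂ : Set ℝ} (hXB : NullMeasurableSet (X ∩ B₁) volume)
    (hYB : NullMeasurableSet (Y ∩ B₂) volume)
    (hfinX : volume (X ∩ B₁) ≠ ⊤) (hfinY : volume (Y ∩ B₂) ≠ ⊤)
    (hvol : volume X = volume Y) (hint : volume (Y ∩ B₂) ≤ volume (X ∩ B₁)) :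
    volume (X \ B₁) ≤ volume (Y \ B₂) := by
  have hX : X \ B₁ = X \ (X ∩ B₁) := by ext u; simp only [mem_diff, mem_inter_iff]; tauto
  have hY : Y \ B₂ = Y \ (Y ∩ B₂) := by ext u; simp only [mem_diff, mem_inter_iff]; tauto
  rw [hX, hY, measure_diff inter_subset_left hXB hfinX,
    measure_diff inter_subset_left hYB hfinY, hvol]
  exact tsub_le_tsub_left hint _

section Main

variable (Q Q₀ : ℝ → ℝ) (hmeas : Measurable Q) (M : ℝ)
  (hbdd : ∀ u ∈ Set.Icc (0:ℝ) 1, |Q u| ≤ M)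
  (hmeas₀ : Measurable Q₀) (hmono₀ : MonotoneOn Q₀ (Set.Icc (0:ℝ) 1))

include hmeas hbdd hmeas₀ hmono₀

/-- Sum of the two hinge integrals is improved by rearrangement, for every shift `r`. -/
lemma sum_hinge_le (r : ℝ) :
    (∫⁻ u in Set.Icc (0:ℝ) 1, ENNReal.ofReal (Gfun Q u - Q₀ u - r))
      + (∫⁻ u in Set.Icc (0:ℝ) 1, ENNReal.ofReal (Q₀ u - Gfun Q u - r))
    ≤ (∫⁻ u in Set.Icc (0:ℝ) 1, ENNReal.ofReal (Q u - Q₀ u - r))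
      + (∫⁻ u in Set.Icc (0:ℝ) 1, ENNReal.ofReal (Q₀ u - Q u - r)) := by
  have hG := Gfun_meas Q hmeas M hbdd
  have key : ∀ s t : ℝ,
      volume ({u ∈ Set.Icc (0:ℝ) 1 | Q u ≤ s} ∩ {u ∈ Set.Icc (0:ℝ) 1 | Q₀ u ≤ t})
        ≤ volume ({u ∈ Set.Icc (0:ℝ) 1 | Gfun Q u ≤ s} ∩ {u ∈ Set.Icc (0:ℝ) 1 | Q₀ u ≤ t}) :=
    key_ineq Q hmeas M hbdd Q₀ hmono₀
  have hmA : ∀ s : ℝ, MeasurableSet {u ∈ Set.Icc (0:ℝ) 1 | Q u ≤ s} := fun s =>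
    measurableSet_Icc.inter (hmeas measurableSet_Iic)
  have hmG : ∀ s : ℝ, MeasurableSet {u ∈ Set.Icc (0:ℝ) 1 | Gfun Q u ≤ s} := fun s =>
    measurableSet_Icc.inter (hG measurableSet_Iic)
  have hmB : ∀ t : ℝ, MeasurableSet {u ∈ Set.Icc (0:ℝ) 1 | Q₀ u ≤ t} := fun t =>
    measurableSet_Icc.inter (hmeas₀ measurableSet_Iic)
  refine add_le_add ?_ ?_
  · -- ∫ ofReal (G - Q₀ - r) ≤ ∫ ofReal (Q - Q₀ - r)
    rw [hinge_eq Q₀ (Gfun Q) hmeas₀ hG r, hinge_eq Q₀ Q hmeas₀ hmeas r]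
    refine lintegral_mono fun s => ?_
    refine diff_le (((hmB s).inter (hmG (s+r))).nullMeasurableSet)
      (((hmB s).inter (hmA (s+r))).nullMeasurableSet)
      (vol_ne_top ((inter_subset_left).trans (sep_subset _ _)))
      (vol_ne_top ((inter_subset_left).trans (sep_subset _ _))) rfl ?_
    calc volume ({u ∈ Set.Icc (0:ℝ) 1 | Q₀ u ≤ s} ∩ {u ∈ Set.Icc (0:ℝ) 1 | Q u ≤ s + r})
        = volume ({u ∈ Set.Icc (0:ℝ) 1 | Q u ≤ s + r} ∩ {u ∈ Set.Icc (0:ℝ) 1 | Q₀ u ≤ s}) := by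
          rw [inter_comm]
      _ ≤ volume ({u ∈ Set.Icc (0:ℝ) 1 | Gfun Q u ≤ s + r} ∩ {u ∈ Set.Icc (0:ℝ) 1 | Q₀ u ≤ s}) :=
          key (s+r) s
      _ = _ := by rw [inter_comm]
  · -- ∫ ofReal (Q₀ - G - r) ≤ ∫ ofReal (Q₀ - Q - r)
    rw [hinge_eq (Gfun Q) Q₀ hG hmeas₀ r, hinge_eq Q Q₀ hmeas hmeas₀ r]
    refine lintegral_mono fun s => ?_
    refine diff_le (((hmG s).inter (hmB (s+r))).nullMeasurableSet)
      (((hmA s).inter (hmB (s+r))).nullMeasurableSet)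
      (vol_ne_top ((inter_subset_left).trans (sep_subset _ _)))
      (vol_ne_top ((inter_subset_left).trans (sep_subset _ _)))
      ?_ (key s (s+r))
    rw [Gfun_vol Q hmeas M hbdd s, A_vol Q s]

end Main

lemma w_nonneg {p : ℝ} (hp : 1 < p) {r : ℝ} (hr : 0 ≤ r) : 0 ≤ p * (p-1) * r ^ (p-2) :=
  mul_nonneg (mul_nonneg (by linarith) (by linarith)) (Real.rpow_nonneg hr _)

/-- The basic hinge computation: `∫_0^∞ p(p-1) r^(p-2) (y-r)_+ dr = y^p`. -/
lemma J_eq {p : ℝ} (hp : 1 < p) {y : ℝ} (hy : 0 ≤ y) :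
    ∫⁻ r in Set.Ioi (0:ℝ),
        ENNReal.ofReal (p * (p-1) * r ^ (p-2)) * ENNReal.ofReal (y - r)
      = ENNReal.ofReal (y ^ p) := by
  have hcongr : ∫⁻ r in Set.Ioi (0:ℝ),
      ENNReal.ofReal (p * (p-1) * r ^ (p-2)) * ENNReal.ofReal (y - r)
      = ∫⁻ r in Set.Ioi (0:ℝ), ENNReal.ofReal (p * (p-1) * r ^ (p-2) * (y - r)) := by
    refine setLIntegral_congr_fun measurableSet_Ioi (fun r hr => ?_)
    rcases le_total 0 (y - r) with h | h
    · rw [ENNReal.ofReal_mul (w_nonneg hp (le_of_lt hr))]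
    · rw [ENNReal.ofReal_eq_zero.2 h, mul_zero, ENNReal.ofReal_eq_zero.2
        (mul_nonpos_iff.2 (Or.inl ⟨w_nonneg hp (le_of_lt hr), h⟩))]
  rw [hcongr]
  rcases eq_or_lt_of_le hy with hy0 | hy0
  · have : ∫⁻ r in Set.Ioi (0:ℝ), ENNReal.ofReal (p * (p-1) * r ^ (p-2) * (y - r))
        = ∫⁻ _ in Set.Ioi (0:ℝ), 0 := by
      refine setLIntegral_congr_fun measurableSet_Ioi (fun r hr => ?_)
      have hr' := mem_Ioi.1 hr
      rw [ENNReal.ofReal_eq_zero.2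
        (mul_nonpos_iff.2 (Or.inl ⟨w_nonneg hp (le_of_lt hr), by linarith⟩))]
    rw [this, lintegral_zero, ← hy0, Real.zero_rpow (by linarith), ENNReal.ofReal_zero]
  -- now 0 < y
  have hsplit : Set.Ioi (0:ℝ) = Set.Ioc 0 y ∪ Set.Ioi y := (Set.Ioc_union_Ioi_eq_Ioi hy).symm
  rw [hsplit, lintegral_union measurableSet_Ioi Set.Ioc_disjoint_Ioi_same]
  have hzero : ∫⁻ r in Set.Ioi y, ENNReal.ofReal (p * (p-1) * r ^ (p-2) * (y - r)) = 0 := by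
    rw [← lintegral_zero (μ := volume.restrict (Set.Ioi y))]
    refine setLIntegral_congr_fun measurableSet_Ioi (fun r hr => ?_)
    rw [ENNReal.ofReal_eq_zero.2
      (mul_nonpos_iff.2 (Or.inl ⟨w_nonneg hp (by linarith [mem_Ioi.1 hr]), by
        have := mem_Ioi.1 hr; linarith⟩))]
  rw [hzero, add_zero]
  -- integrability of the rpow pieces
  have h1 : IntegrableOn (fun r : ℝ => r ^ (p-2)) (Set.Ioc 0 y) := by
    exact (intervalIntegrable_iff_integrableOn_Ioc_of_le hy0.le).1
      (intervalIntegral.intervalIntegrable_rpow' (by linarith))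
  have h2 : IntegrableOn (fun r : ℝ => r ^ (p-1)) (Set.Ioc 0 y) := by
    exact (intervalIntegrable_iff_integrableOn_Ioc_of_le hy0.le).1
      (intervalIntegral.intervalIntegrable_rpow' (by linarith))
  have heqfun : ∀ r : ℝ, 0 ≤ r →
      p * (p-1) * r ^ (p-2) * (y - r)
        = (p * (p-1) * y) * r ^ (p-2) - (p * (p-1)) * r ^ (p-1) := by
    intro r hr
    rcases eq_or_lt_of_le hr with hr0 | hr0
    · rw [← hr0, Real.zero_rpow (by linarith : p - 1 ≠ 0)]
      ring
    · have : r ^ (p-1) = r ^ (p-2) * r := by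
        rw [show p - 1 = p - 2 + 1 by ring, Real.rpow_add_one (ne_of_gt hr0)]
      rw [this]
      ring
  have hInt : IntegrableOn (fun r : ℝ => p * (p-1) * r ^ (p-2) * (y - r)) (Set.Ioc 0 y) := by
    refine (Integrable.sub (h1.const_mul (p * (p-1) * y)) (h2.const_mul (p * (p-1)))).congr ?_
    refine (ae_restrict_iff' measurableSet_Ioc).2 (ae_of_all _ fun r hr => ?_)
    exact (heqfun r hr.1.le).symm
  have hnn : 0 ≤ᵐ[volume.restrict (Set.Ioc 0 y)]
      fun r : ℝ => p * (p-1) * r ^ (p-2) * (y - r) := by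
    refine (ae_restrict_iff' measurableSet_Ioc).2 (ae_of_all _ fun r hr => ?_)
    exact mul_nonneg (w_nonneg hp hr.1.le) (by linarith [hr.2])
  rw [← ofReal_integral_eq_lintegral_ofReal hInt hnn]
  congr 1
  have hval : ∫ r in Set.Ioc 0 y, p * (p-1) * r ^ (p-2) * (y - r) = y ^ p := by
    rw [← intervalIntegral.integral_of_le hy0.le]
    have : ∫ r in (0:ℝ)..y, p * (p-1) * r ^ (p-2) * (y - r)
        = ∫ r in (0:ℝ)..y, ((p * (p-1) * y) * r ^ (p-2) - (p * (p-1)) * r ^ (p-1)) := by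
      refine intervalIntegral.integral_congr fun r hr => ?_
      have hr0 : 0 ≤ r := by
        rcases hr with ⟨hr1, hr2⟩
        simpa [hy0.le] using hr1
      exact heqfun r hr0
    rw [this, intervalIntegral.integral_sub
      ((intervalIntegral.intervalIntegrable_rpow' (by linarith)).const_mul _)
      ((intervalIntegral.intervalIntegrable_rpow' (by linarith)).const_mul _),
      intervalIntegral.integral_const_mul, intervalIntegral.integral_const_mul,
      integral_rpow (Or.inl (by linarith : (-1:ℝ) < p - 2)),
      integral_rpow (Or.inl (by linarith : (-1:ℝ) < p - 1))]
    rw [show p - 2 + 1 = p - 1 by ring, show p - 1 + 1 = p by ring,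
      Real.zero_rpow (by linarith : p - 1 ≠ 0), Real.zero_rpow (by linarith : p ≠ 0),
      sub_zero, sub_zero]
    have hyne : y ≠ 0 := ne_of_gt hy0
    have hyy : y ^ (p-1) = y ^ p / y := by
      rw [eq_div_iff hyne, ← Real.rpow_add_one hyne]
      congr 1
      ring
    rw [hyy]
    have hp1 : p - 1 ≠ 0 := by linarith
    have hp0 : p ≠ 0 := by linarith
    field_simp
    ring
  rw [hval]

/-- Representation of `|x|^p` as a superposition of hinge functions, `p > 1`. -/
lemma rpow_repr {p : ℝ} (hp : 1 < p) (a b : ℝ) :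
    ∫⁻ r in Set.Ioi (0:ℝ),
        ENNReal.ofReal (p * (p-1) * r ^ (p-2))
          * (ENNReal.ofReal (a - b - r) + ENNReal.ofReal (b - a - r))
      = ENNReal.ofReal (|a - b| ^ p) := by
  rcases le_total 0 (a - b) with h | h
  · have hcongr : ∫⁻ r in Set.Ioi (0:ℝ),
        ENNReal.ofReal (p * (p-1) * r ^ (p-2))
          * (ENNReal.ofReal (a - b - r) + ENNReal.ofReal (b - a - r))
        = ∫⁻ r in Set.Ioi (0:ℝ),
            ENNReal.ofReal (p * (p-1) * r ^ (p-2)) * ENNReal.ofReal ((a - b) - r) := by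
      refine setLIntegral_congr_fun measurableSet_Ioi (fun r hr => ?_)
      have hr0 := mem_Ioi.1 hr
      rw [ENNReal.ofReal_eq_zero.2 (by linarith : b - a - r ≤ 0), add_zero]
    rw [hcongr, J_eq hp h, abs_of_nonneg h]
  · have hcongr : ∫⁻ r in Set.Ioi (0:ℝ),
        ENNReal.ofReal (p * (p-1) * r ^ (p-2))
          * (ENNReal.ofReal (a - b - r) + ENNReal.ofReal (b - a - r))
        = ∫⁻ r in Set.Ioi (0:ℝ),
            ENNReal.ofReal (p * (p-1) * r ^ (p-2)) * ENNReal.ofReal ((b - a) - r) := by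
      refine setLIntegral_congr_fun measurableSet_Ioi (fun r hr => ?_)
      have hr0 := mem_Ioi.1 hr
      rw [ENNReal.ofReal_eq_zero.2 (by linarith : a - b - r ≤ 0), zero_add]
    rw [hcongr, J_eq hp (by linarith : (0:ℝ) ≤ b - a), abs_of_nonpos (by linarith)]
    congr 2
    ring

lemma abs_repr (a b : ℝ) :
    ENNReal.ofReal |a - b| = ENNReal.ofReal (a - b - 0) + ENNReal.ofReal (b - a - 0) := by
  rcases le_total 0 (a - b) with h | h
  · rw [abs_of_nonneg h]
    rw [sub_zero, sub_zero, ENNReal.ofReal_eq_zero.2 (by linarith : b - a ≤ 0), add_zero]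
  · rw [abs_of_nonpos h]
    rw [sub_zero, sub_zero, ENNReal.ofReal_eq_zero.2 h, zero_add]
    congr 1
    ring

end RearrAux

open RearrAux in
/-- Improvement in estimation: the rearranged curve is weakly closer in `L^p`, `1 ≤ p < ∞`,
to any nondecreasing target `Q₀` than the original curve. -/
theorem rearr_Lp_improvement (Q Q₀ : ℝ → ℝ)
    (hmeas : Measurable Q) (M : ℝ) (hbdd : ∀ u ∈ Set.Icc (0:ℝ) 1, |Q u| ≤ M)
    (hmeas₀ : Measurable Q₀) (hmono₀ : MonotoneOn Q₀ (Set.Icc (0:ℝ) 1))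
    (p : ℝ) (hp : 1 ≤ p) :
    ∫ u in Set.Icc (0:ℝ) 1, |rearr Q u - Q₀ u| ^ p
      ≤ ∫ u in Set.Icc (0:ℝ) 1, |Q u - Q₀ u| ^ p := by
  have hG : Measurable (Gfun Q) := Gfun_meas Q hmeas M hbdd
  have hp0 : (0:ℝ) ≤ p := by linarith
  set M₀ : ℝ := max |Q₀ 0| |Q₀ 1| with hM₀
  have hQ₀bdd : ∀ u ∈ Set.Icc (0:ℝ) 1, |Q₀ u| ≤ M₀ := by
    intro u hu
    rw [abs_le]
    constructor
    · have h1 : Q₀ 0 ≤ Q₀ u := hmono₀ (by norm_num) hu hu.1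
      have h2 := neg_abs_le (Q₀ 0)
      have h3 := le_max_left |Q₀ 0| |Q₀ 1|
      linarith
    · have h1 : Q₀ u ≤ Q₀ 1 := hmono₀ hu (by norm_num) hu.2
      have h2 := le_abs_self (Q₀ 1)
      have h3 := le_max_right |Q₀ 0| |Q₀ 1|
      linarith
  -- core ENNReal inequality with the measurable representative `Gfun Q`
  have core : ∫⁻ u in Set.Icc (0:ℝ) 1, ENNReal.ofReal (|Gfun Q u - Q₀ u| ^ p)
      ≤ ∫⁻ u in Set.Icc (0:ℝ) 1, ENNReal.ofReal (|Q u - Q₀ u| ^ p) := by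
    have hsum := sum_hinge_le Q Q₀ hmeas M hbdd hmeas₀ hmono₀
    rcases eq_or_lt_of_le hp with hp1 | hp1
    · -- p = 1
      have habs : ∀ f : ℝ → ℝ, ∀ u : ℝ,
          ENNReal.ofReal (|f u - Q₀ u| ^ p)
            = ENNReal.ofReal (f u - Q₀ u - 0) + ENNReal.ofReal (Q₀ u - f u - 0) := by
        intro f u
        rw [← hp1, Real.rpow_one, abs_repr]
      have mG1 : Measurable fun u => ENNReal.ofReal (Gfun Q u - Q₀ u - 0) :=
        ((hG.sub hmeas₀).sub measurable_const).ennreal_ofReal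
      have mQ1 : Measurable fun u => ENNReal.ofReal (Q u - Q₀ u - 0) :=
        ((hmeas.sub hmeas₀).sub measurable_const).ennreal_ofReal
      calc ∫⁻ u in Set.Icc (0:ℝ) 1, ENNReal.ofReal (|Gfun Q u - Q₀ u| ^ p)
          = ∫⁻ u in Set.Icc (0:ℝ) 1,
              (ENNReal.ofReal (Gfun Q u - Q₀ u - 0) + ENNReal.ofReal (Q₀ u - Gfun Q u - 0)) :=
            lintegral_congr fun u => habs _ u
        _ = (∫⁻ u in Set.Icc (0:ℝ) 1, ENNReal.ofReal (Gfun Q u - Q₀ u - 0))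
              + ∫⁻ u in Set.Icc (0:ℝ) 1, ENNReal.ofReal (Q₀ u - Gfun Q u - 0) :=
            lintegral_add_left mG1 _
        _ ≤ (∫⁻ u in Set.Icc (0:ℝ) 1, ENNReal.ofReal (Q u - Q₀ u - 0))
              + ∫⁻ u in Set.Icc (0:ℝ) 1, ENNReal.ofReal (Q₀ u - Q u - 0) := hsum 0
        _ = ∫⁻ u in Set.Icc (0:ℝ) 1,
              (ENNReal.ofReal (Q u - Q₀ u - 0) + ENNReal.ofReal (Q₀ u - Q u - 0)) :=
            (lintegral_add_left mQ1 _).symm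
        _ = ∫⁻ u in Set.Icc (0:ℝ) 1, ENNReal.ofReal (|Q u - Q₀ u| ^ p) :=
            lintegral_congr fun u => (habs _ u).symm
    · -- p > 1
      have hrepr : ∀ f : ℝ → ℝ, Measurable f →
          ∫⁻ u in Set.Icc (0:ℝ) 1, ENNReal.ofReal (|f u - Q₀ u| ^ p)
            = ∫⁻ r in Set.Ioi (0:ℝ), ENNReal.ofReal (p * (p-1) * r ^ (p-2))
                * ((∫⁻ u in Set.Icc (0:ℝ) 1, ENNReal.ofReal (f u - Q₀ u - r))
                  + ∫⁻ u in Set.Icc (0:ℝ) 1, ENNReal.ofReal (Q₀ u - f u - r)) := by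
        intro f hf
        have m2 : Measurable fun q : ℝ × ℝ => ENNReal.ofReal (f q.1 - Q₀ q.1 - q.2) :=
          (((hf.comp measurable_fst).sub (hmeas₀.comp measurable_fst)).sub
            measurable_snd).ennreal_ofReal
        have m3 : Measurable fun q : ℝ × ℝ => ENNReal.ofReal (Q₀ q.1 - f q.1 - q.2) :=
          (((hmeas₀.comp measurable_fst).sub (hf.comp measurable_fst)).sub
            measurable_snd).ennreal_ofReal
        have m1 : Measurable fun q : ℝ × ℝ => ENNReal.ofReal (p * (p-1) * q.2 ^ (p-2)) :=
          ((measurable_snd.pow measurable_const).const_mul (p * (p-1))).ennreal_ofReal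
        have mtot : Measurable fun q : ℝ × ℝ =>
            ENNReal.ofReal (p * (p-1) * q.2 ^ (p-2))
              * (ENNReal.ofReal (f q.1 - Q₀ q.1 - q.2)
                + ENNReal.ofReal (Q₀ q.1 - f q.1 - q.2)) := m1.mul (m2.add m3)
        have minner : ∀ r : ℝ, Measurable fun u =>
            ENNReal.ofReal (f u - Q₀ u - r) + ENNReal.ofReal (Q₀ u - f u - r) := fun r =>
          (((hf.sub hmeas₀).sub measurable_const).ennreal_ofReal).add
            (((hmeas₀.sub hf).sub measurable_const).ennreal_ofReal)
        calc ∫⁻ u in Set.Icc (0:ℝ) 1, ENNReal.ofReal (|f u - Q₀ u| ^ p)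
            = ∫⁻ u in Set.Icc (0:ℝ) 1, ∫⁻ r in Set.Ioi (0:ℝ),
                ENNReal.ofReal (p * (p-1) * r ^ (p-2))
                  * (ENNReal.ofReal (f u - Q₀ u - r) + ENNReal.ofReal (Q₀ u - f u - r)) :=
              lintegral_congr fun u => (rpow_repr hp1 (f u) (Q₀ u)).symm
          _ = ∫⁻ r in Set.Ioi (0:ℝ), ∫⁻ u in Set.Icc (0:ℝ) 1,
                ENNReal.ofReal (p * (p-1) * r ^ (p-2))
                  * (ENNReal.ofReal (f u - Q₀ u - r) + ENNReal.ofReal (Q₀ u - f u - r)) :=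
              lintegral_lintegral_swap mtot.aemeasurable
          _ = _ := by
              refine lintegral_congr fun r => ?_
              rw [lintegral_const_mul _ (minner r), lintegral_add_left (f := fun u => ENNReal.ofReal (f u - Q₀ u - r))
                (((hf.sub hmeas₀).sub measurable_const).ennreal_ofReal)]
      rw [hrepr Q hmeas, hrepr (Gfun Q) hG]
      refine lintegral_mono fun r => ?_
      exact mul_le_mul_right (hsum r) _
  -- convert the Bochner integrals to lower integrals
  have h0 : ∀ᵐ (u : ℝ) ∂(volume.restrict (Set.Icc (0:ℝ) 1)), u ≠ 0 := by
    rw [ae_iff]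
    have hset : {u : ℝ | ¬ u ≠ 0} = {0} := by ext u; simp
    rw [hset]
    refine le_antisymm (le_trans (Measure.restrict_le_self _) (by simp)) zero_le
  have hae : ∀ᵐ u ∂(volume.restrict (Set.Icc (0:ℝ) 1)),
      |rearr Q u - Q₀ u| ^ p = |Gfun Q u - Q₀ u| ^ p := by
    filter_upwards [h0, ae_restrict_mem measurableSet_Icc] with u hu0 huI
    have huIoc : u ∈ Set.Ioc (0:ℝ) 1 := ⟨lt_of_le_of_ne huI.1 (Ne.symm hu0), huI.2⟩
    rw [Gfun, if_pos huIoc]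
  have hnn1 : 0 ≤ᵐ[volume.restrict (Set.Icc (0:ℝ) 1)]
      fun u => |rearr Q u - Q₀ u| ^ p :=
    ae_of_all _ fun u => Real.rpow_nonneg (abs_nonneg _) _
  have hnn2 : 0 ≤ᵐ[volume.restrict (Set.Icc (0:ℝ) 1)]
      fun u => |Q u - Q₀ u| ^ p :=
    ae_of_all _ fun u => Real.rpow_nonneg (abs_nonneg _) _
  have hmG : Measurable fun u => |Gfun Q u - Q₀ u| ^ p :=
    (hG.sub hmeas₀).abs.pow measurable_const
  have hmQ : Measurable fun u => |Q u - Q₀ u| ^ p :=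
    (hmeas.sub hmeas₀).abs.pow measurable_const
  have hsm1 : AEStronglyMeasurable (fun u => |rearr Q u - Q₀ u| ^ p)
      (volume.restrict (Set.Icc (0:ℝ) 1)) :=
    hmG.aestronglyMeasurable.congr (hae.mono fun u h => h.symm)
  rw [integral_eq_lintegral_of_nonneg_ae hnn1 hsm1,
    integral_eq_lintegral_of_nonneg_ae hnn2 hmQ.aestronglyMeasurable]
  have hchain : ∫⁻ u in Set.Icc (0:ℝ) 1, ENNReal.ofReal (|rearr Q u - Q₀ u| ^ p)
      ≤ ∫⁻ u in Set.Icc (0:ℝ) 1, ENNReal.ofReal (|Q u - Q₀ u| ^ p) := by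
    calc ∫⁻ u in Set.Icc (0:ℝ) 1, ENNReal.ofReal (|rearr Q u - Q₀ u| ^ p)
        = ∫⁻ u in Set.Icc (0:ℝ) 1, ENNReal.ofReal (|Gfun Q u - Q₀ u| ^ p) :=
          lintegral_congr_ae (hae.mono fun u h => by dsimp only; rw [h])
      _ ≤ _ := core
  have hfin : ∫⁻ u in Set.Icc (0:ℝ) 1, ENNReal.ofReal (|Q u - Q₀ u| ^ p) ≠ ⊤ := by
    have hb : ∫⁻ u in Set.Icc (0:ℝ) 1, ENNReal.ofReal (|Q u - Q₀ u| ^ p)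
        ≤ ENNReal.ofReal ((M + M₀) ^ p) * volume (Set.Icc (0:ℝ) 1) := by
      rw [← setLIntegral_const (Set.Icc (0:ℝ) 1) (ENNReal.ofReal ((M + M₀) ^ p))]
      refine setLIntegral_mono' measurableSet_Icc fun u hu => ?_
      refine ENNReal.ofReal_le_ofReal (Real.rpow_le_rpow (abs_nonneg _) ?_ hp0)
      calc |Q u - Q₀ u| ≤ |Q u| + |Q₀ u| := by
            rw [sub_eq_add_neg]
            exact (abs_add_le _ _).trans (by rw [abs_neg])
        _ ≤ M + M₀ := add_le_add (hbdd u hu) (hQ₀bdd u hu)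
    refine ne_top_of_le_ne_top ?_ hb
    exact ENNReal.mul_ne_top ENNReal.ofReal_ne_top (by simp [Real.volume_Icc])
  exact ENNReal.toReal_mono hfin hchain
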